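/- Let u be meromorphic at 0 with u(x) = r(r+1)/x² + O(1) for a positive integer r, and suppose ψ is a meromorphic solution of -ψ'' + uψ = αψ with a pole of order r at 0, and φ is a meromorphic solution of -φ'' + uφ = βφ with a pole of order at most r at 0. Then the Wronskian W(ψ,φ) = ψ'φ - ψφ' is meromorphic at 0, and the residue at 0 of (α-β)ψφ equals zero (since it is the derivative of the meromorphic function W). -/

import Mathlib

open Finset

/-- Coefficient of a product of Laurent series whose supports are bounded below,
as a finite sum over an interval. -/
lemma mul_coeff_Icc (f g : LaurentSeries ℂ) (a b : ℤ)
    (hf : ∀ k : ℤ, k < a → f.coeff k = 0) (hg : ∀ k : ℤ, k < b → g.coeff k = 0) (n : ℤ) :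
    (f * g).coeff n = ∑ i ∈ Finset.Icc a (n - b), f.coeff i * g.coeff (n - i) := by
  rw [HahnSeries.coeff_mul]
  have hsub : Finset.antidiagonal f.isPWO_support g.isPWO_support n ⊆
      (Finset.Icc a (n - b)).image (fun i => (i, n - i)) := by
    intro ij hij
    rw [Finset.mem_antidiagonal] at hij
    obtain ⟨h1, h2, h3⟩ := hij
    have ha : a ≤ ij.1 := by
      by_contra h
      exact h1 (hf _ (lt_of_not_ge h))
    have hb : b ≤ ij.2 := by
      by_contra h
      exact h2 (hg _ (lt_of_not_ge h))
    refine Finset.mem_image.2 ⟨ij.1, Finset.mem_Icc.2 ⟨ha, by omega⟩, ?_⟩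
    have : n - ij.1 = ij.2 := by omega
    rw [this]
  rw [Finset.sum_subset hsub ?zero]
  · rw [Finset.sum_image ?inj]
    case inj =>
      intro i _ j _ h
      simpa using congrArg Prod.fst h
  case zero =>
    intro x hx hnx
    obtain ⟨i, hi, rfl⟩ := Finset.mem_image.1 hx
    rw [Finset.mem_antidiagonal] at hnx
    simp only [HahnSeries.mem_support] at hnx
    push_neg at hnx
    rcases em (f.coeff i = 0) with h | h
    · simp [h]
    rcases em (g.coeff (n - i) = 0) with h' | h'
    · simp [h']
    exact absurd (by ring) (hnx h h')

/-- Let `u` be meromorphic at `0` with `u = r(r+1)/x² + O(1)`.  If `ψ` is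
a meromorphic solution of `-ψ'' + uψ = αψ` with a pole of order `r` at `0`, and `φ` a
meromorphic solution of `-φ'' + uφ = βφ` with a pole of order at most `r`, then the
residue at `0` of `(α-β)ψφ` vanishes (it is the derivative of the Wronskian).
The ODEs are encoded coefficientwise on Laurent series:
`-(n+2)(n+1)ψ_{n+2} + (Uψ)_n = α ψ_n`. -/
theorem wronskian_residue_zero (r : ℕ) (hr : 1 ≤ r) (α β : ℂ)
    (U ψ φ : LaurentSeries ℂ)
    (hU₂ : U.coeff (-2) = (r : ℂ) * (r + 1))
    (hUreg : ∀ k : ℤ, k < 0 → k ≠ -2 → U.coeff k = 0)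
    (hodeψ : ∀ n : ℤ,
      -((n : ℂ) + 2) * ((n : ℂ) + 1) * ψ.coeff (n + 2) + (U * ψ).coeff n = α * ψ.coeff n)
    (hodeφ : ∀ n : ℤ,
      -((n : ℂ) + 2) * ((n : ℂ) + 1) * φ.coeff (n + 2) + (U * φ).coeff n = β * φ.coeff n)
    (hψpole : ∀ k : ℤ, k < -(r : ℤ) → ψ.coeff k = 0) (hψlead : ψ.coeff (-(r : ℤ)) ≠ 0)
    (hφpole : ∀ k : ℤ, k < -(r : ℤ) → φ.coeff k = 0) :
    (α - β) * (ψ * φ).coeff (-1) = 0 := by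
  set R : ℤ := (r : ℤ) with hRdef
  have hψ' : ∀ k : ℤ, k < -R → ψ.coeff k = 0 := hψpole
  have hφ' : ∀ k : ℤ, k < -R → φ.coeff k = 0 := hφpole
  have hUψ : ∀ i : ℤ, (U * ψ).coeff i
      = α * ψ.coeff i + ((i : ℂ) + 2) * ((i : ℂ) + 1) * ψ.coeff (i + 2) := fun i => by
    linear_combination hodeψ i
  have hUφ : ∀ i : ℤ, (U * φ).coeff i
      = β * φ.coeff i + ((i : ℂ) + 2) * ((i : ℂ) + 1) * φ.coeff (i + 2) := fun i => by
    linear_combination hodeφ i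
  have hUψlow : ∀ k : ℤ, k < -R - 2 → (U * ψ).coeff k = 0 := by
    intro k hk
    rw [hUψ k, hψ' k (by omega), hψ' (k + 2) (by omega)]; ring
  have hUφlow : ∀ k : ℤ, k < -R - 2 → (U * φ).coeff k = 0 := by
    intro k hk
    rw [hUφ k, hφ' k (by omega), hφ' (k + 2) (by omega)]; ring
  have hA := mul_coeff_Icc (U * ψ) φ (-R - 2) (-R) hUψlow hφ' (-1)
  have hB := mul_coeff_Icc (U * φ) ψ (-R - 2) (-R) hUφlow hψ' (-1)
  have hC := mul_coeff_Icc ψ φ (-R) (-R) hψ' hφ' (-1)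
  have hCb := mul_coeff_Icc φ ψ (-R) (-R) hφ' hψ' (-1)
  set I : Finset ℤ := Finset.Icc (-R - 2) (-1 - -R) with hIdef
  -- the two expansions of (U*ψ*φ).coeff (-1) agree
  have hABeq : ((U * ψ) * φ).coeff (-1) = ((U * φ) * ψ).coeff (-1) := by
    have : (U * ψ) * φ = (U * φ) * ψ := by ring
    rw [this]
  have h0 : ∑ i ∈ I, (U * ψ).coeff i * φ.coeff (-1 - i)
      - ∑ i ∈ I, (U * φ).coeff i * ψ.coeff (-1 - i) = 0 := by
    rw [← hA, ← hB, hABeq, sub_self]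
  -- the "second derivative" part cancels by the involution i ↦ -3 - i
  have hD : ∑ i ∈ I, (((i : ℂ) + 2) * ((i : ℂ) + 1) * ψ.coeff (i + 2) * φ.coeff (-1 - i)
      - ((i : ℂ) + 2) * ((i : ℂ) + 1) * φ.coeff (i + 2) * ψ.coeff (-1 - i)) = 0 := by
    apply Finset.sum_involution (g := fun i _ => -3 - i)
    · intro a ha
      have e1 : (-3 - a) + 2 = -1 - a := by ring
      have e2 : (-1 : ℤ) - (-3 - a) = a + 2 := by ring
      rw [e1, e2]
      push_cast
      ring
    · intro a _ _
      show (-3 : ℤ) - a ≠ a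
      omega
    · intro a ha
      show (-3 : ℤ) - (-3 - a) = a
      omega
    · intro a ha
      simp only [hIdef, Finset.mem_Icc] at ha ⊢
      omega
  -- the α part
  have hα : ∑ i ∈ I, α * (ψ.coeff i * φ.coeff (-1 - i)) = α * (ψ * φ).coeff (-1) := by
    rw [hC, Finset.mul_sum]
    symm
    apply Finset.sum_subset
    · exact Finset.Icc_subset_Icc (by omega) le_rfl
    · intro i hi hni
      rw [hψ' i ?_]
      · ring
      · simp only [hIdef, Finset.mem_Icc] at hi hni; omega
  -- the β part
  have hβ : ∑ i ∈ I, β * (φ.coeff i * ψ.coeff (-1 - i)) = β * (ψ * φ).coeff (-1) := by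
    rw [mul_comm ψ φ, hCb, Finset.mul_sum]
    symm
    apply Finset.sum_subset
    · exact Finset.Icc_subset_Icc (by omega) le_rfl
    · intro i hi hni
      rw [hφ' i ?_]
      · ring
      · simp only [hIdef, Finset.mem_Icc] at hi hni; omega
  have hsplit : ∑ i ∈ I, ((U * ψ).coeff i * φ.coeff (-1 - i)
        - (U * φ).coeff i * ψ.coeff (-1 - i))
      = (α - β) * (ψ * φ).coeff (-1) := by
    have step : ∀ i ∈ I, (U * ψ).coeff i * φ.coeff (-1 - i)
        - (U * φ).coeff i * ψ.coeff (-1 - i)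
        = (α * (ψ.coeff i * φ.coeff (-1 - i)) - β * (φ.coeff i * ψ.coeff (-1 - i)))
          + (((i : ℂ) + 2) * ((i : ℂ) + 1) * ψ.coeff (i + 2) * φ.coeff (-1 - i)
            - ((i : ℂ) + 2) * ((i : ℂ) + 1) * φ.coeff (i + 2) * ψ.coeff (-1 - i)) := by
      intro i _
      rw [hUψ i, hUφ i]; ring
    rw [Finset.sum_congr rfl step, Finset.sum_add_distrib, hD, add_zero,
      Finset.sum_sub_distrib, hα, hβ]
    ring
  rw [← hsplit, Finset.sum_sub_distrib]
  exact h0
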